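/- Let H be a Hilbert space and let P, Q be bounded projections on H such that P - Q is a compact operator. If (im P, ker Q) is a Fredholm pair, then for any bounded projection P' with P' - P compact, (im P', ker Q) is also a Fredholm pair. -/

import Mathlib

open Metric Filter Topology ContinuousLinearMap

section Aux

variable {H : Type*} [NormedAddCommGroup H] [InnerProductSpace ℝ H] [CompleteSpace H]

local notation "⟪" x ", " y "⟫" => @inner ℝ _ _ x y

/-- If `C` is a compact operator and `S` is a closed submodule on which
`⟪x, y⟫ = ⟪C x, y⟫`, then `S` is finite dimensional. -/
lemma aux_findim_of_inner_eq {C : H →L[ℝ] H} (hC : IsCompactOperator ⇑C)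
    (S : Submodule ℝ H) (hScl : IsClosed (S : Set H))
    (hS : ∀ x ∈ S, ∀ y ∈ S, ⟪x, y⟫ = ⟪C x, y⟫) : FiniteDimensional ℝ S := by
  have hC' : IsCompactOperator ⇑(C : H →ₗ[ℝ] H) := hC
  obtain ⟨K₀, hK₀, hK₀'⟩ := hC'.image_closedBall_subset_compact 1
  have key : ∀ x ∈ S, ∀ y ∈ S, ‖x - y‖ ^ 2 ≤ ‖C x - C y‖ * ‖x - y‖ := by
    intro x hx y hy
    have h1 : ⟪x - y, x - y⟫ = ⟪C (x - y), x - y⟫ :=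
      hS _ (S.sub_mem hx hy) _ (S.sub_mem hx hy)
    calc ‖x - y‖ ^ 2 = ⟪x - y, x - y⟫ := (real_inner_self_eq_norm_sq _).symm
      _ = ⟪C (x - y), x - y⟫ := h1
      _ ≤ ‖C (x - y)‖ * ‖x - y‖ := real_inner_le_norm _ _
      _ = ‖C x - C y‖ * ‖x - y‖ := by rw [map_sub]
  have hseq : IsSeqCompact (Metric.closedBall (0 : S) 1) := by
    intro u hu
    have hunorm : ∀ n, ‖(u n : H)‖ ≤ 1 := by
      intro n
      have := hu n
      rw [Metric.mem_closedBall, dist_zero_right] at this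
      simpa using this
    have humem : ∀ n, C ((u n : H)) ∈ K₀ := by
      intro n
      exact hK₀' ⟨(u n : H), by simpa [Metric.mem_closedBall, dist_zero_right] using hunorm n, rfl⟩
    obtain ⟨y, -, φ, hφ, hconv⟩ := hK₀.tendsto_subseq humem
    set w : ℕ → H := fun n => (u (φ n) : H) with hwdef
    have hwS : ∀ n, w n ∈ S := fun n => (u (φ n)).2
    have hwnorm : ∀ n, ‖w n‖ ≤ 1 := fun n => hunorm (φ n)
    have hCcauchy : CauchySeq (fun n => C (w n)) := hconv.cauchySeq
    have hwcauchy : CauchySeq w := by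
      rw [Metric.cauchySeq_iff] at hCcauchy ⊢
      intro ε hε
      obtain ⟨N, hN⟩ := hCcauchy (ε ^ 2 / 2) (by positivity)
      refine ⟨N, fun m hm n hn => ?_⟩
      have h2 := key _ (hwS m) _ (hwS n)
      have hd : dist (C (w m)) (C (w n)) < ε ^ 2 / 2 := hN m hm n hn
      rw [dist_eq_norm] at hd ⊢
      have hnorm2 : ‖w m - w n‖ ≤ 2 := by
        calc ‖w m - w n‖ ≤ ‖w m‖ + ‖w n‖ := norm_sub_le _ _
          _ ≤ 2 := by linarith [hwnorm m, hwnorm n]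
      nlinarith [norm_nonneg (w m - w n), norm_nonneg (C (w m) - C (w n)), sq_nonneg ε]
    obtain ⟨x, hx⟩ := cauchySeq_tendsto_of_complete hwcauchy
    have hxS : x ∈ S := hScl.mem_of_tendsto hx (Eventually.of_forall hwS)
    have hxnorm : ‖x‖ ≤ 1 := le_of_tendsto hx.norm (Eventually.of_forall hwnorm)
    refine ⟨⟨x, hxS⟩, ?_, φ, hφ, ?_⟩
    · rw [Metric.mem_closedBall, dist_zero_right]
      simpa using hxnorm
    · rw [tendsto_subtype_rng]
      exact hx
  have hcb : IsCompact (Metric.closedBall (0 : S) 1) := hseq.isCompact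
  exact FiniteDimensional.of_isCompact_closedBall₀ ℝ one_pos hcb

/-- The sum of a closed submodule and a finite-dimensional submodule of its
orthogonal complement is closed. -/
lemma aux_sup_closed (W F : Submodule ℝ H) (hW : IsClosed (W : Set H))
    [FiniteDimensional ℝ F] (hFW : F ≤ Wᗮ) :
    IsClosed ((W ⊔ F : Submodule ℝ H) : Set H) := by
  haveI : CompleteSpace W := hW.completeSpace_coe
  have hFcl : IsClosed (F : Set H) := F.closed_of_finiteDimensional
  refine IsSeqClosed.isClosed ?_
  intro u x hu hux
  have hproj : ∀ n, u n - (Submodule.orthogonalProjectionOnto W (u n) : H) ∈ F := by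
    intro n
    obtain ⟨wn, hwn, fn, hfn, huneq⟩ := Submodule.mem_sup.1 (hu n)
    have h1 : (Submodule.orthogonalProjectionOnto W (u n) : H) = wn := by
      rw [← huneq, map_add]
      have h2 : (Submodule.orthogonalProjectionOnto W wn : H) = wn :=
        Submodule.starProjection_eq_self_iff.2 hwn
      have h3 : Submodule.orthogonalProjectionOnto W fn = 0 :=
        Submodule.orthogonalProjectionOnto_apply_of_mem_orthogonal (hFW hfn)
      rw [Submodule.coe_add, h2, h3, Submodule.coe_zero, add_zero]
    rw [h1, ← huneq]
    simpa using hfn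
  have hcont : Continuous fun z : H => z - (Submodule.orthogonalProjectionOnto W z : H) :=
    continuous_id.sub (W.subtypeL.comp (Submodule.orthogonalProjectionOnto W)).continuous
  have hlim : Tendsto (fun n => u n - (Submodule.orthogonalProjectionOnto W (u n) : H)) atTop
      (𝓝 (x - (Submodule.orthogonalProjectionOnto W x : H))) := (hcont.tendsto x).comp hux
  have hfF : x - (Submodule.orthogonalProjectionOnto W x : H) ∈ F :=
    hFcl.mem_of_tendsto hlim (Eventually.of_forall hproj)
  have : x = (Submodule.orthogonalProjectionOnto W x : H) + (x - (Submodule.orthogonalProjectionOnto W x : H)) := by abel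
  rw [this]
  exact Submodule.mem_sup.2 ⟨_, (Submodule.orthogonalProjectionOnto W x).2, _, hfF, rfl⟩

end Aux

/-- A pair of subspaces `(U, V)` of a Banach space `Z` is *Fredholm* if `U ∩ V` is
finite dimensional and `U + V` is closed and of finite codimension in `Z`. -/
def FredholmPair {Z : Type*} [NormedAddCommGroup Z] [NormedSpace ℝ Z]
    (U V : Submodule ℝ Z) : Prop :=
  FiniteDimensional ℝ ↥(U ⊓ V) ∧ IsClosed ((U ⊔ V : Submodule ℝ Z) : Set Z) ∧
    FiniteDimensional ℝ (Z ⧸ (U ⊔ V))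

/-- Let `H` be a Hilbert space and `P, Q` bounded projections on `H` such
that `P - Q` is a compact operator.  If `(im P, ker Q)` is a Fredholm pair, then for any
bounded projection `P'` with `P' - P` compact, `(im P', ker Q)` is also a Fredholm
pair. -/
theorem stmt_5 {H : Type*} [NormedAddCommGroup H] [InnerProductSpace ℝ H] [CompleteSpace H]
    (P Q P' : H →L[ℝ] H)
    (hP : ∀ x, P (P x) = P x) (hQ : ∀ x, Q (Q x) = Q x) (hP' : ∀ x, P' (P' x) = P' x)
    (hPQ : IsCompactOperator (⇑(P - Q)))
    (hFred : FredholmPair (LinearMap.range (P : H →ₗ[ℝ] H)) (LinearMap.ker (Q : H →ₗ[ℝ] H)))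
    (hP'P : IsCompactOperator (⇑(P' - P))) :
    FredholmPair (LinearMap.range (P' : H →ₗ[ℝ] H)) (LinearMap.ker (Q : H →ₗ[ℝ] H)) := by
  classical
  -- the difference `P' - Q` is compact
  have hK : IsCompactOperator ⇑(P' - Q) := by
    have h := hP'P.add hPQ
    have he : (⇑(P' - P) + ⇑(P - Q)) = ⇑(P' - Q) := by
      funext x
      simp only [Pi.add_apply, ContinuousLinearMap.sub_apply]
      abel
    rwa [he] at h
  set C : H →L[ℝ] H := (P' - Q).comp (P' - Q) with hCdef
  have hC : IsCompactOperator ⇑C := by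
    have := hK.comp_clm (P' - Q)
    rwa [← ContinuousLinearMap.coe_comp'] at this
  set T : H →L[ℝ] H := ContinuousLinearMap.id ℝ H - C with hTdef
  have hTx : ∀ x, T x = x - (P' - Q) ((P' - Q) x) := fun x => rfl
  -- membership in the range of the idempotent `P'`
  have hrange : ∀ x, x ∈ LinearMap.range (P' : H →ₗ[ℝ] H) ↔ P' x = x := by
    intro x
    constructor
    · rintro ⟨y, rfl⟩; exact hP' y
    · intro h; exact ⟨x, h⟩
  -- Part 1 : the intersection is finite dimensional
  have hUclosed : IsClosed ((LinearMap.range (P' : H →ₗ[ℝ] H) ⊓ LinearMap.ker (Q : H →ₗ[ℝ] H) : Submodule ℝ H) : Set H) := by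
    have hset : ((LinearMap.range (P' : H →ₗ[ℝ] H) ⊓ LinearMap.ker (Q : H →ₗ[ℝ] H) : Submodule ℝ H) : Set H)
        = {x | P' x = x} ∩ {x | Q x = 0} := by
      ext x
      simp only [Submodule.mem_inf, SetLike.mem_coe, Set.mem_inter_iff, Set.mem_setOf_eq,
        LinearMap.mem_ker, hrange, ContinuousLinearMap.coe_coe]
    rw [hset]
    exact (isClosed_eq P'.continuous continuous_id).inter
      (isClosed_eq Q.continuous continuous_const)
  have hU : FiniteDimensional ℝ ↥(LinearMap.range (P' : H →ₗ[ℝ] H) ⊓ LinearMap.ker (Q : H →ₗ[ℝ] H)) := by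
    apply aux_findim_of_inner_eq hK _ hUclosed
    intro x hx y hy
    obtain ⟨hx1, hx2⟩ := Submodule.mem_inf.1 hx
    have hKx : (P' - Q) x = x := by
      have h1 : P' x = x := (hrange x).1 hx1
      have h2 : Q x = 0 := hx2
      simp [ContinuousLinearMap.sub_apply, h1, h2]
    rw [hKx]
  -- Part 2 : the range of `T = 1 - C` is closed
  have hkerclosed : IsClosed ((LinearMap.ker (T : H →ₗ[ℝ] H) : Submodule ℝ H) : Set H) :=
    ContinuousLinearMap.isClosed_ker T
  haveI : CompleteSpace (LinearMap.ker (T : H →ₗ[ℝ] H)) := hkerclosed.completeSpace_coe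
  set M : Submodule ℝ H := (LinearMap.ker (T : H →ₗ[ℝ] H))ᗮ with hMdef
  have hMclosed : IsClosed (M : Set H) := Submodule.isClosed_orthogonal _
  haveI : CompleteSpace M := hMclosed.completeSpace_coe
  have hbb : ∃ c : ℝ, 0 < c ∧ ∀ x ∈ M, c * ‖x‖ ≤ ‖T x‖ := by
    by_contra hcon
    push_neg at hcon
    obtain ⟨K₀, hK₀c, hK₀s⟩ := (hC : IsCompactOperator ⇑(C : H →ₗ[ℝ] H)).image_closedBall_subset_compact 1
    have hseq : ∀ n : ℕ, ∃ u : H, u ∈ M ∧ ‖u‖ = 1 ∧ ‖T u‖ < 1 / (n + 1) := by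
      intro n
      obtain ⟨x, hxM, hx⟩ := hcon (1 / (n + 1)) (by positivity)
      have hx0 : x ≠ 0 := by
        rintro rfl
        simp at hx
      have hnx : (0:ℝ) < ‖x‖ := norm_pos_iff.2 hx0
      refine ⟨‖x‖⁻¹ • x, M.smul_mem _ hxM, ?_, ?_⟩
      · rw [norm_smul, norm_inv, norm_norm, inv_mul_cancel₀ hnx.ne']
      · rw [map_smul, norm_smul, norm_inv, norm_norm]
        rw [inv_mul_lt_iff₀ hnx]
        linarith [hx]
    choose u huM hun huT using hseq
    have humem : ∀ n, C (u n) ∈ K₀ := by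
      intro n
      exact hK₀s ⟨u n, by simp [Metric.mem_closedBall, dist_zero_right, (hun n).le], rfl⟩
    obtain ⟨y, -, φ, hφ, hconv⟩ := hK₀c.tendsto_subseq humem
    have hTconv : Tendsto (fun n => T (u (φ n))) atTop (𝓝 0) := by
      apply squeeze_zero_norm (a := fun n : ℕ => 1 / (n + 1))
      · intro n
        have h1 : ‖T (u (φ n))‖ < 1 / (φ n + 1) := huT (φ n)
        have h2 : (1 : ℝ) / (φ n + 1) ≤ 1 / (n + 1) := by
          apply one_div_le_one_div_of_le (by positivity)
          have := hφ.le_apply (x := n)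
          push_cast
          exact_mod_cast add_le_add_left (Nat.cast_le.2 this) 1
        linarith
      · exact tendsto_one_div_add_atTop_nhds_zero_nat
    have huconv : Tendsto (fun n => u (φ n)) atTop (𝓝 y) := by
      have heq : ∀ n, u (φ n) = T (u (φ n)) + C (u (φ n)) := by
        intro n
        rw [hTx]
        have : (P' - Q) ((P' - Q) (u (φ n))) = C (u (φ n)) := rfl
        rw [this]
        abel
      have := hTconv.add hconv
      rw [zero_add] at this
      exact this.congr fun n => (heq n).symm
    have hyM : y ∈ M := hMclosed.mem_of_tendsto huconv (Eventually.of_forall fun n => huM _)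
    have hy1 : ‖y‖ = 1 := by
      have h1 : Tendsto (fun n => ‖u (φ n)‖) atTop (𝓝 ‖y‖) := huconv.norm
      have h2 : (fun n => ‖u (φ n)‖) = fun _ => (1:ℝ) := funext fun n => hun (φ n)
      rw [h2] at h1
      exact (tendsto_const_nhds_iff.1 h1).symm
    have hyker : y ∈ LinearMap.ker (T : H →ₗ[ℝ] H) := by
      have h1 : Tendsto (fun n => T (u (φ n))) atTop (𝓝 (T y)) :=
        (T.continuous.tendsto y).comp huconv
      have := tendsto_nhds_unique h1 hTconv
      simpa [LinearMap.mem_ker] using this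
    have hy0 : y = 0 := by
      have h := (Submodule.mem_orthogonal _ y).1 hyM y hyker
      exact inner_self_eq_zero.1 h
    rw [hy0, norm_zero] at hy1
    exact zero_ne_one hy1
  obtain ⟨c, hc, hbound⟩ := hbb
  have hanti : AntilipschitzWith (c⁻¹).toNNReal ⇑(T.comp M.subtypeL) := by
    apply ContinuousLinearMap.antilipschitz_of_bound
    intro x
    have h1 : c * ‖(x : H)‖ ≤ ‖T (x : H)‖ := hbound _ x.2
    have h2 : ‖(x : H)‖ ≤ c⁻¹ * ‖T (x : H)‖ := by
      rw [← div_eq_inv_mul, le_div_iff₀ hc]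
      linarith
    calc ‖x‖ = ‖(x : H)‖ := rfl
      _ ≤ c⁻¹ * ‖T (x : H)‖ := h2
      _ = ((c⁻¹).toNNReal : ℝ) * ‖(T.comp M.subtypeL) x‖ := by
          rw [Real.coe_toNNReal _ (by positivity)]
          rfl
  have hclr : IsClosed (Set.range ⇑(T.comp M.subtypeL)) :=
    hanti.isClosed_range (T.comp M.subtypeL).uniformContinuous
  have hW : IsClosed ((LinearMap.range (T : H →ₗ[ℝ] H) : Submodule ℝ H) : Set H) := by
    have hsets : ((LinearMap.range (T : H →ₗ[ℝ] H) : Submodule ℝ H) : Set H)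
        = Set.range ⇑(T.comp M.subtypeL) := by
      apply Set.Subset.antisymm
      · rintro x ⟨z, rfl⟩
        have hcompl : IsCompl (LinearMap.ker (T : H →ₗ[ℝ] H)) M :=
          Submodule.isCompl_orthogonal_of_hasOrthogonalProjection
        have hz : z ∈ LinearMap.ker (T : H →ₗ[ℝ] H) ⊔ M := by
          rw [hcompl.codisjoint.eq_top]; trivial
        obtain ⟨k, hk, m, hm, rfl⟩ := Submodule.mem_sup.1 hz
        refine ⟨⟨m, hm⟩, ?_⟩
        have hk0 : T k = 0 := hk
        simp [ContinuousLinearMap.comp_apply, map_add, hk0]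
      · rintro x ⟨m, rfl⟩
        exact ⟨(m : H), rfl⟩
    rw [hsets]
    exact hclr
  -- Part 3 : the orthogonal complement of the range of `T` is finite dimensional
  haveI hWorth : FiniteDimensional ℝ ↥((LinearMap.range (T : H →ₗ[ℝ] H))ᗮ) := by
    apply aux_findim_of_inner_eq hC _ (Submodule.isClosed_orthogonal _)
    intro x hx y hy
    have h := (Submodule.mem_orthogonal _ y).1 hy (T x) ⟨x, rfl⟩
    have hTsplit : T x = x - C x := rfl
    rw [hTsplit, inner_sub_left, sub_eq_zero] at h
    exact h
  -- assemble : the sup contains the range of `T`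
  set V : Submodule ℝ H := LinearMap.range (P' : H →ₗ[ℝ] H) ⊔ LinearMap.ker (Q : H →ₗ[ℝ] H) with hVdef
  have hWV : LinearMap.range (T : H →ₗ[ℝ] H) ≤ V := by
    rintro x ⟨z, rfl⟩
    have ha : P' (Q z) ∈ LinearMap.range (P' : H →ₗ[ℝ] H) := ⟨Q z, rfl⟩
    have hbmem : T z - P' (Q z) ∈ LinearMap.ker (Q : H →ₗ[ℝ] H) := by
      have hTz : T z = z - (P' (P' z) - P' (Q z) - Q (P' z) + Q (Q z)) := by
        rw [hTx]
        simp only [ContinuousLinearMap.sub_apply, map_sub]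
        abel
      have : Q (T z - P' (Q z)) = 0 := by
        rw [hTz]
        have e1 : P' (P' z) = P' z := hP' z
        have e2 : Q (Q z) = Q z := hQ z
        simp only [map_sub, map_add, e1, e2, hQ]
        abel
      exact this
    have hx : T z = P' (Q z) + (T z - P' (Q z)) := by abel
    change T z ∈ V
    rw [hx]
    exact Submodule.add_mem _ (Submodule.mem_sup_left ha) (Submodule.mem_sup_right hbmem)
  haveI : CompleteSpace (LinearMap.range (T : H →ₗ[ℝ] H)) := hW.completeSpace_coe
  have hcompl : IsCompl (LinearMap.range (T : H →ₗ[ℝ] H)) (LinearMap.range (T : H →ₗ[ℝ] H))ᗮ :=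
    Submodule.isCompl_orthogonal_of_hasOrthogonalProjection
  have hdecomp : LinearMap.range (T : H →ₗ[ℝ] H) ⊔ ((LinearMap.range (T : H →ₗ[ℝ] H))ᗮ ⊓ V) = V := by
    rw [← sup_inf_assoc_of_le _ hWV, hcompl.codisjoint.eq_top, top_inf_eq]
  haveI hFfd : FiniteDimensional ℝ ↥((LinearMap.range (T : H →ₗ[ℝ] H))ᗮ ⊓ V) :=
    Submodule.finiteDimensional_of_le inf_le_left
  have hVclosed : IsClosed (V : Set H) := by
    rw [← hdecomp]
    exact aux_sup_closed _ _ hW inf_le_left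
  haveI : CompleteSpace V := hVclosed.completeSpace_coe
  haveI hVorth : FiniteDimensional ℝ ↥(Vᗮ) :=
    Submodule.finiteDimensional_of_le (Submodule.orthogonal_le hWV)
  have hquot : FiniteDimensional ℝ (H ⧸ V) := by
    have e := Submodule.quotientEquivOfIsCompl V Vᗮ
      (Submodule.isCompl_orthogonal_of_hasOrthogonalProjection)
    exact Module.Finite.equiv e.symm
  exact ⟨hU, hVclosed, hquot⟩
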